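/- Let m ≥ 4 be even. Then every diagonal entry G_ii of the Gram matrix G of the Barnes-Wall lattice BW(m) is divisible by 4, and every off-diagonal entry G_ij that is odd satisfies p(i) = p(j) = 0. -/

import Mathlib

open Matrix

/-- `bwBit i a` is the `a`-th binary digit of `i`. -/
def bwBit (i a : ℕ) : ℕ := i / 2 ^ a % 2

/-- `bwPar m i` is the number of zero digits in the length-`m` binary expansion of `i`, mod 2. -/
def bwPar (m i : ℕ) : ℕ := ((Finset.range m).filter fun a => bwBit i a = 0).card % 2

/-- The exponent of `√2` in the `(i,j)` entry of the Gram matrix of `BW(m)`. -/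
def bwExp (m i j : ℕ) : ℤ :=
  (bwPar m i : ℤ) + (bwPar m j : ℤ) - 2 * (((m + 1) / 2 : ℕ) : ℤ) +
    ∑ l ∈ Finset.range m,
      (2 * (bwBit i l : ℤ) * (bwBit j l : ℤ) - (bwBit i l : ℤ) - (bwBit j l : ℤ) + 2)

/-- The Gram matrix of the Barnes-Wall lattice `BW(m)`:
`G i j = (w_i, w_j) = √2 ^ (p i + p j - 2⌈m/2⌉ + ∑ (2 i[l] j[l] - i[l] - j[l] + 2))`. -/
noncomputable def bwGram (m : ℕ) : Matrix (Fin (2 ^ m)) (Fin (2 ^ m)) ℝ :=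
  Matrix.of fun i j => Real.sqrt 2 ^ bwExp m (i : ℕ) (j : ℕ)

lemma bwBit_cases (i a : ℕ) : bwBit i a = 0 ∨ bwBit i a = 1 :=
  Nat.mod_two_eq_zero_or_one _

lemma bwPar_le (m i : ℕ) : bwPar m i ≤ 1 :=
  Nat.lt_succ_iff.mp (Nat.mod_lt _ two_pos)

lemma bwHalf (m : ℕ) (hme : Even m) : (((m + 1) / 2 : ℕ) : ℤ) * 2 = m := by
  obtain ⟨t, ht⟩ := hme
  have : (m + 1) / 2 = t := by omega
  rw [this]; omega

lemma bwExp_diag (m i : ℕ) (hme : Even m) :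
    bwExp m i i = ((2 * bwPar m i + m : ℕ) : ℤ) := by
  unfold bwExp
  have hterm : ∀ l ∈ Finset.range m,
      (2 * (bwBit i l : ℤ) * (bwBit i l : ℤ) - (bwBit i l : ℤ) - (bwBit i l : ℤ) + 2)
      = (2 : ℤ) := by
    intro l _
    rcases bwBit_cases i l with h | h <;> rw [h] <;> norm_num
  have hsum : ∑ l ∈ Finset.range m,
      (2 * (bwBit i l : ℤ) * (bwBit i l : ℤ) - (bwBit i l : ℤ) - (bwBit i l : ℤ) + 2)
      = 2 * m := by
    rw [Finset.sum_congr rfl hterm, Finset.sum_const, Finset.card_range, nsmul_eq_mul]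
    ring
  rw [hsum]
  have h2 := bwHalf m hme
  push_cast
  omega

lemma bwSum_ge (m i j : ℕ) :
    (m : ℤ) ≤ ∑ l ∈ Finset.range m,
      (2 * (bwBit i l : ℤ) * (bwBit j l : ℤ) - (bwBit i l : ℤ) - (bwBit j l : ℤ) + 2) := by
  calc (m : ℤ) = ∑ _l ∈ Finset.range m, (1 : ℤ) := by
        rw [Finset.sum_const, Finset.card_range]; ring
    _ ≤ _ := by
        apply Finset.sum_le_sum
        intro l _
        rcases bwBit_cases i l with h | h <;> rcases bwBit_cases j l with h' | h' <;>
          rw [h, h'] <;> norm_num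

lemma sqrt_two_sq : Real.sqrt 2 ^ 2 = 2 := Real.sq_sqrt (by norm_num)

/-- Lemma (Gram matrix of `BW(m)`, `m ≥ 4` even): every diagonal entry of the Gram matrix is
divisible by `4`, and any odd off-diagonal entry forces `p(i) = p(j) = 0`. -/
theorem bwGram_even_case (m : ℕ) (hm : 4 ≤ m) (hme : Even m) :
    (∀ i : Fin (2 ^ m), ∃ k : ℤ, bwGram m i i = 4 * k) ∧
    (∀ i j : Fin (2 ^ m), i ≠ j → (∃ k : ℤ, bwGram m i j = 2 * k + 1) →
      bwPar m (i : ℕ) = 0 ∧ bwPar m (j : ℕ) = 0) := by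
  obtain ⟨t, ht⟩ := hme
  have hme' : Even m := ⟨t, ht⟩
  have ht2 : 2 ≤ t := by omega
  constructor
  · intro i
    set p := bwPar m (i : ℕ) with hp
    refine ⟨2 ^ (p + t - 2), ?_⟩
    have : bwGram m i i = Real.sqrt 2 ^ (2 * p + m) := by
      show Real.sqrt 2 ^ bwExp m (i : ℕ) (i : ℕ) = _
      rw [bwExp_diag m _ hme', zpow_natCast]
    rw [this]
    have hexp : 2 * p + m = 2 * (p + t) := by omega
    rw [hexp, pow_mul, sqrt_two_sq]
    have hpt : p + t = (p + t - 2) + 2 := by omega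
    rw [hpt, pow_add]
    push_cast
    ring
  · intro i j _ ⟨k, hk⟩
    have hkk : Real.sqrt 2 ^ bwExp m (i : ℕ) (j : ℕ) = 2 * (k : ℝ) + 1 := hk
    set e := bwExp m (i : ℕ) (j : ℕ) with he
    have hS := bwSum_ge m (i : ℕ) (j : ℕ)
    have hhalf := bwHalf m hme'
    have henn : 0 ≤ e := by
      rw [he]; unfold bwExp
      have h1 : (0 : ℤ) ≤ (bwPar m (i : ℕ) : ℤ) := Int.natCast_nonneg _
      have h2 : (0 : ℤ) ≤ (bwPar m (j : ℕ) : ℤ) := Int.natCast_nonneg _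
      omega
    set n := e.toNat with hn
    have hen : e = (n : ℤ) := (Int.toNat_of_nonneg henn).symm
    have hkn : Real.sqrt 2 ^ n = 2 * (k : ℝ) + 1 := by
      rw [← zpow_natCast, ← hen]; exact hkk
    have hn0 : n = 0 := by
      rcases Nat.even_or_odd n with ⟨s, hs⟩ | ⟨s, hs⟩
      · -- even: √2 ^ (s+s) = 2^s
        have h2s : Real.sqrt 2 ^ n = (2 : ℝ) ^ s := by
          rw [hs, ← two_mul, pow_mul, sqrt_two_sq]
        rw [h2s] at hkn
        have hZ : (2 : ℤ) ^ s = 2 * k + 1 := by exact_mod_cast hkn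
        by_contra h0
        have hs1 : 1 ≤ s := by omega
        have hdvd : (2 : ℤ) ∣ 2 ^ s := dvd_pow_self 2 (by omega)
        omega
      · -- odd: √2 ^ (2s+1) = 2^s * √2, irrational
        exfalso
        have h2s : Real.sqrt 2 ^ n = ((2 : ℚ) ^ s : ℚ) * Real.sqrt 2 := by
          rw [hs, pow_succ, pow_mul, sqrt_two_sq]; push_cast; ring
        have hirr : Irrational (((2 : ℚ) ^ s : ℚ) * Real.sqrt 2) :=
          irrational_sqrt_two.ratCast_mul (by positivity)
        rw [h2s] at hkn
        exact (hirr.ne_int (2 * k + 1)) (by rw [hkn]; push_cast; ring)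
    have he0 : e = 0 := by omega
    have : (bwPar m (i : ℕ) : ℤ) + (bwPar m (j : ℕ) : ℤ) ≤ 0 := by
      have := he0
      rw [he] at this
      unfold bwExp at this
      omega
    constructor <;> omega
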